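/- For every ε' > 0 there exists ε > 0 such that for all Banach spaces X, Y and every surjective map T : X → Y with T(0) = 0 satisfying (1-ε)‖x-y‖ ≤ ‖T(x)-T(y)‖ ≤ (1+ε)‖x-y‖ for all x, y ∈ X, one has ‖T(x+y) - T(x) - T(y)‖ ≤ ε'(‖x‖ + ‖y‖) for all x, y ∈ X. -/

import Mathlib

/-- A pair of mutually inverse `L`-bi-bounded maps fixing `p` and `q`. -/
def NIP {X : Type} [NormedAddCommGroup X] (p q : X) (L : ℝ) (u v : X → X) : Prop :=
  (∀ x, v (u x) = x) ∧ (∀ x, u (v x) = x) ∧ u p = p ∧ u q = q ∧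
  ∀ x y : X, ‖u x - u y‖ ≤ L * ‖x - y‖ ∧ ‖x - y‖ ≤ L * ‖u x - u y‖ ∧
             ‖v x - v y‖ ≤ L * ‖x - y‖ ∧ ‖x - y‖ ≤ L * ‖v x - v y‖

lemma refl_sub_norm {X : Type} [NormedAddCommGroup X] (p q a b : X) :
    ‖(p + q - a) - (p + q - b)‖ = ‖a - b‖ := by
  rw [show (p + q - a) - (p + q - b) = -(a - b) from by abel, norm_neg]

lemma nip_double {X : Type} [NormedAddCommGroup X] [NormedSpace ℝ X] (p q m : X) (hm : m + m = p + q)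
    (L : ℝ) (hL : 1 ≤ L) (u v : X → X) (h : NIP p q L u v) :
    ∃ u' v' : X → X, NIP p q (L ^ 2) u' v' ∧
      2 * ‖u m - m‖ ≤ L * ‖u' m - m‖ := by
  obtain ⟨hvu, huv, hp, hq, hb⟩ := h
  have hL0 : (0:ℝ) ≤ L := le_trans zero_le_one hL
  have hvp : v p = p := by conv_lhs => rw [← hp, hvu]
  have hvq : v q = q := by conv_lhs => rw [← hq, hvu]
  refine ⟨fun x => p + q - v (p + q - u x), fun x => v (p + q - u (p + q - x)),
    ⟨?_, ?_, ?_, ?_, ?_⟩, ?_⟩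
  · intro x; dsimp only
    rw [sub_sub_cancel, huv, sub_sub_cancel, hvu]
  · intro x; dsimp only
    rw [huv, sub_sub_cancel, hvu, sub_sub_cancel]
  · dsimp only; rw [hp, show p + q - p = q from by abel, hvq]; abel
  · dsimp only; rw [hq, show p + q - q = p from by abel, hvp]; abel
  · intro x y; dsimp only
    have h1 := hb x y
    have h2 := hb (p + q - u x) (p + q - u y)
    have h3 := hb (p + q - x) (p + q - y)
    have h4 := hb (p + q - u (p + q - x)) (p + q - u (p + q - y))
    rw [refl_sub_norm] at h2 h3 h4
    refine ⟨?_, ?_, ?_, ?_⟩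
    · rw [refl_sub_norm]
      calc ‖v (p + q - u x) - v (p + q - u y)‖ ≤ L * ‖u x - u y‖ := h2.2.2.1
        _ ≤ L * (L * ‖x - y‖) := by
            have := h1.1; nlinarith
        _ = L ^ 2 * ‖x - y‖ := by ring
    · rw [refl_sub_norm]
      calc ‖x - y‖ ≤ L * ‖u x - u y‖ := h1.2.1
        _ ≤ L * (L * ‖v (p + q - u x) - v (p + q - u y)‖) := by
            have := h2.2.2.2; nlinarith
        _ = L ^ 2 * ‖v (p + q - u x) - v (p + q - u y)‖ := by ring
    · calc ‖v (p + q - u (p + q - x)) - v (p + q - u (p + q - y))‖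
          ≤ L * ‖u (p + q - x) - u (p + q - y)‖ := h4.2.2.1
        _ ≤ L * (L * ‖x - y‖) := by
            have := h3.1; nlinarith
        _ = L ^ 2 * ‖x - y‖ := by ring
    · calc ‖x - y‖ ≤ L * ‖u (p + q - x) - u (p + q - y)‖ := h3.2.1
        _ ≤ L * (L * ‖v (p + q - u (p + q - x)) - v (p + q - u (p + q - y))‖) := by
            have h5 := h4.2.2.2; nlinarith
        _ = _ := by ring
  · dsimp only
    have e1 : (p + q - v (p + q - u m)) - m = v (u m) - v (p + q - u m) := by
      rw [hvu, ← hm]; abel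
    have e2 : u m - (p + q - u m) = (u m - m) + (u m - m) := by
      rw [← hm]; abel
    have hz : ‖(u m - m) + (u m - m)‖ = 2 * ‖u m - m‖ := by
      rw [← two_smul ℝ (u m - m), norm_smul]; norm_num
    calc 2 * ‖u m - m‖ = ‖u m - (p + q - u m)‖ := by rw [e2, hz]
      _ ≤ L * ‖v (u m) - v (p + q - u m)‖ := (hb _ _).2.2.2
      _ = L * ‖(p + q - v (p + q - u m)) - m‖ := by rw [e1]

lemma nip_iter {X : Type} [NormedAddCommGroup X] [NormedSpace ℝ X] (p q m : X)
    (hm : m + m = p + q) (L : ℝ) (hL : 1 ≤ L) (u v : X → X) (h : NIP p q L u v) (n : ℕ) :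
    ∃ u' v' : X → X, NIP p q (L ^ (2 ^ n)) u' v' ∧
      (2:ℝ) ^ n * ‖u m - m‖ ≤ L ^ (2 ^ n) * ‖u' m - m‖ := by
  induction n with
  | zero =>
    refine ⟨u, v, by simpa using h, ?_⟩
    simpa using le_mul_of_one_le_left (norm_nonneg _) hL
  | succ n ih =>
    obtain ⟨u1, v1, h1, hd1⟩ := ih
    have hL1 : 1 ≤ L ^ (2 ^ n) := one_le_pow₀ hL
    obtain ⟨u2, v2, h2, hd2⟩ := nip_double p q m hm (L ^ (2 ^ n)) hL1 u1 v1 h1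
    have e : (L ^ (2 ^ n)) ^ 2 = L ^ (2 ^ (n + 1)) := by
      rw [← pow_mul, pow_succ]
    refine ⟨u2, v2, e ▸ h2, ?_⟩
    rw [← e, pow_succ (2:ℝ) n]
    nlinarith [norm_nonneg (u m - m), norm_nonneg (u1 m - m), norm_nonneg (u2 m - m)]

lemma mid_est {X Y : Type} [NormedAddCommGroup X] [NormedSpace ℝ X] [NormedAddCommGroup Y]
    (ε : ℝ) (hε0 : 0 < ε) (hε1 : ε < 1) (T : X → Y) (hs : Function.Surjective T)
    (hb : ∀ x y : X, (1 - ε) * ‖x - y‖ ≤ ‖T x - T y‖ ∧ ‖T x - T y‖ ≤ (1 + ε) * ‖x - y‖)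
    (p q m : X) (hm : m + m = p + q) (n : ℕ) :
    (2:ℝ) ^ n * ‖T m + T m - (T p + T q)‖ ≤
      (1 + ε) * (((1+ε)/(1-ε)) ^ (2^n) * ((((1+ε)/(1-ε)) ^ (2^n) + 1) * ‖m - p‖)) := by
  have h1ε : (0:ℝ) < 1 - ε := by linarith
  have hinj : Function.Injective T := by
    intro a b hab
    have h := (hb a b).1
    rw [hab, sub_self, norm_zero] at h
    have : ‖a - b‖ = 0 := le_antisymm (by nlinarith [norm_nonneg (a - b)]) (norm_nonneg _)
    exact sub_eq_zero.mp (norm_eq_zero.mp this)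
  have : Nonempty X := ⟨0⟩
  set S : Y → X := Function.invFun T with hS
  have hTS : ∀ y, T (S y) = y := Function.rightInverse_invFun hs
  have hST : ∀ x, S (T x) = x := fun x => hinj (hTS (T x))
  have hS1 : ∀ a b : Y, (1 - ε) * ‖S a - S b‖ ≤ ‖a - b‖ := by
    intro a b; have := (hb (S a) (S b)).1; rwa [hTS, hTS] at this
  have hS2 : ∀ a b : Y, ‖a - b‖ ≤ (1 + ε) * ‖S a - S b‖ := by
    intro a b; have := (hb (S a) (S b)).2; rwa [hTS, hTS] at this
  set L : ℝ := (1 + ε) / (1 - ε) with hLdef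
  have hL : 1 ≤ L := by rw [hLdef, le_div_iff₀ h1ε]; linarith
  set u : X → X := fun x => S (T p + T q - T (p + q - x)) with hu
  set v : X → X := fun x => p + q - S (T p + T q - T x) with hv
  have hNIP : NIP p q L u v := by
    refine ⟨?_, ?_, ?_, ?_, ?_⟩
    · intro x; rw [hu, hv]; dsimp only
      rw [hTS, sub_sub_cancel, hST, sub_sub_cancel]
    · intro x; rw [hu, hv]; dsimp only
      rw [sub_sub_cancel, hTS, sub_sub_cancel, hST]
    · rw [hu]; dsimp only
      rw [add_sub_cancel_left, add_sub_cancel_right, hST]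
    · rw [hu]; dsimp only
      rw [add_sub_cancel_right, add_sub_cancel_left, hST]
    · intro x y; rw [hu, hv]; dsimp only
      have e1 : ‖(T p + T q - T (p + q - x)) - (T p + T q - T (p + q - y))‖
          = ‖T (p + q - x) - T (p + q - y)‖ := refl_sub_norm _ _ _ _
      have e2 : ‖(p + q - x) - (p + q - y)‖ = ‖x - y‖ := refl_sub_norm _ _ _ _
      have hb1 := (hb (p + q - x) (p + q - y)).1
      have hb2 := (hb (p + q - x) (p + q - y)).2
      rw [e2] at hb1 hb2
      have hA1 := hS1 (T p + T q - T (p + q - x)) (T p + T q - T (p + q - y))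
      have hA2 := hS2 (T p + T q - T (p + q - x)) (T p + T q - T (p + q - y))
      rw [e1] at hA1 hA2
      have e3 : ‖(p + q - S (T p + T q - T x)) - (p + q - S (T p + T q - T y))‖
          = ‖S (T p + T q - T x) - S (T p + T q - T y)‖ := refl_sub_norm _ _ _ _
      have e4 : ‖(T p + T q - T x) - (T p + T q - T y)‖ = ‖T x - T y‖ := refl_sub_norm _ _ _ _
      have hB1 := hS1 (T p + T q - T x) (T p + T q - T y)
      have hB2 := hS2 (T p + T q - T x) (T p + T q - T y)
      rw [e4] at hB1 hB2
      have hb3 := (hb x y).1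
      have hb4 := (hb x y).2
      refine ⟨?_, ?_, ?_, ?_⟩
      · rw [hLdef, div_mul_eq_mul_div, le_div_iff₀ h1ε]; linarith
      · rw [hLdef, div_mul_eq_mul_div, le_div_iff₀ h1ε]; linarith
      · rw [e3, hLdef, div_mul_eq_mul_div, le_div_iff₀ h1ε]; linarith
      · rw [e3, hLdef, div_mul_eq_mul_div, le_div_iff₀ h1ε]; linarith
  obtain ⟨u', v', hNIP', hd⟩ := nip_iter p q m hm L hL u v hNIP n
  set L1 : ℝ := L ^ (2 ^ n) with hL1def
  have hL1 : 1 ≤ L1 := one_le_pow₀ hL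
  -- displacement lower bound
  have hmm : p + q - m = m := by rw [← hm, add_sub_cancel_right]
  have hum : u m = S (T p + T q - T m) := by rw [hu]; dsimp only; rw [hmm]
  have hD : ‖T m + T m - (T p + T q)‖ ≤ (1 + ε) * ‖u m - m‖ := by
    have h2 := hS2 (T p + T q - T m) (T m)
    rw [hST] at h2
    rw [show (T p + T q - T m) - T m = -((T m + T m) - (T p + T q)) from by abel, norm_neg] at h2
    rw [hum]; exact h2
  -- upper bound for the iterated map
  have hup : ‖u' m - m‖ ≤ (L1 + 1) * ‖m - p‖ := by
    obtain ⟨_, _, hp', _, hb'⟩ := hNIP'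
    calc ‖u' m - m‖ ≤ ‖u' m - u' p‖ + ‖u' p - m‖ := norm_sub_le_norm_sub_add_norm_sub _ _ _
      _ = ‖u' m - u' p‖ + ‖p - m‖ := by rw [hp']
      _ ≤ L1 * ‖m - p‖ + ‖m - p‖ :=
          add_le_add (hb' m p).1 (le_of_eq (norm_sub_rev p m))
      _ = (L1 + 1) * ‖m - p‖ := by ring
  have h2n : (0:ℝ) < 2 ^ n := by positivity
  calc (2:ℝ) ^ n * ‖T m + T m - (T p + T q)‖
      ≤ (2:ℝ) ^ n * ((1 + ε) * ‖u m - m‖) := by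
        exact mul_le_mul_of_nonneg_left hD (le_of_lt h2n)
    _ = (1 + ε) * ((2:ℝ) ^ n * ‖u m - m‖) := by ring
    _ ≤ (1 + ε) * (L1 * ‖u' m - m‖) := by
        exact mul_le_mul_of_nonneg_left hd (by linarith)
    _ ≤ (1 + ε) * (L1 * ((L1 + 1) * ‖m - p‖)) := by
        have h0 : (0:ℝ) ≤ L1 := by linarith
        exact mul_le_mul_of_nonneg_left (mul_le_mul_of_nonneg_left hup h0) (by linarith)

set_option maxHeartbeats 1000000 in
theorem gevirtz_uniform_ulam :
    ∀ ε' : ℝ, 0 < ε' → ∃ ε : ℝ, 0 < ε ∧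
      ∀ (X Y : Type) [NormedAddCommGroup X] [NormedSpace ℝ X] [CompleteSpace X]
        [NormedAddCommGroup Y] [NormedSpace ℝ Y] [CompleteSpace Y]
        (T : X → Y), Function.Surjective T → T 0 = 0 →
        (∀ x y : X, (1 - ε) * ‖x - y‖ ≤ ‖T x - T y‖ ∧ ‖T x - T y‖ ≤ (1 + ε) * ‖x - y‖) →
        ∀ x y : X, ‖T (x + y) - T x - T y‖ ≤ ε' * (‖x‖ + ‖y‖) := by
  intro ε' hε'
  set n : ℕ := ⌈12 / ε'⌉₊ + 1 with hn
  set M : ℝ := (2:ℝ) ^ n with hM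
  have hM1 : (1:ℝ) ≤ M := one_le_pow₀ one_le_two
  have hM0 : (0:ℝ) < M := by positivity
  refine ⟨1 / (8 * M), by positivity, ?_⟩
  set ε : ℝ := 1 / (8 * M) with hε
  have hε0 : 0 < ε := by positivity
  have hε8 : ε * (8 * M) = 1 := by rw [hε]; field_simp
  have hεle : ε ≤ 1 / 8 := by
    rw [hε, div_le_div_iff₀ (by positivity) (by norm_num)]
    linarith
  have hε1 : ε < 1 := by linarith
  have h1ε : (0:ℝ) < 1 - ε := by linarith
  -- the key numeric bound : L ^ (2^n) ≤ 2
  set L : ℝ := (1 + ε) / (1 - ε) with hL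
  have hLnn : 0 ≤ L := by positivity
  have hLle : L ≤ (2 * M + 1) / (2 * M) := by
    rw [hL, div_le_div_iff₀ h1ε (by positivity)]
    nlinarith
  have hbern : (1:ℝ) / 2 ≤ ((2 * M) / (2 * M + 1)) ^ (2^n) := by
    have h2 := one_add_mul_le_pow (a := -(1 / (2 * M + 1))) (by
      have : (0:ℝ) < 2 * M + 1 := by linarith
      have : (1:ℝ) / (2 * M + 1) ≤ 1 := by
        rw [div_le_one (by linarith)]; linarith
      linarith) (2^n)
    have e1 : (1:ℝ) + -(1 / (2 * M + 1)) = (2 * M) / (2 * M + 1) := by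
      field_simp
      ring
    have e2 : ((2^n : ℕ) : ℝ) = M := by rw [hM]; push_cast; ring
    rw [e1, e2] at h2
    have h5 : M * (1 / (2 * M + 1)) ≤ 1 / 2 := by
      rw [mul_one_div, div_le_iff₀ (by linarith)]
      linarith
    have : (1:ℝ)/2 ≤ 1 + M * -(1 / (2 * M + 1)) := by
      rw [mul_neg]; linarith
    linarith
  have hinv : ((2 * M + 1) / (2 * M)) ^ (2^n) * ((2 * M) / (2 * M + 1)) ^ (2^n) = 1 := by
    rw [← mul_pow, show (2 * M + 1) / (2 * M) * ((2 * M) / (2 * M + 1)) = 1 from by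
      field_simp, one_pow]
  have hpowle : ((2 * M + 1) / (2 * M)) ^ (2^n) ≤ 2 := by
    have hp : (0:ℝ) < ((2 * M + 1) / (2 * M)) ^ (2^n) := by positivity
    nlinarith
  have hL1le : L ^ (2^n) ≤ 2 :=
    le_trans (pow_le_pow_left₀ hLnn hLle _) hpowle
  have hL1ge : 1 ≤ L ^ (2^n) := by
    apply one_le_pow₀
    rw [hL, le_div_iff₀ h1ε]; linarith
  -- the final bound 12 ≤ ε' * M
  have hfin : 12 ≤ ε' * M := by
    have h1 : 12 / ε' ≤ (⌈12 / ε'⌉₊ : ℝ) := Nat.le_ceil _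
    have h2 : ((⌈12 / ε'⌉₊ : ℕ) : ℝ) ≤ (n : ℝ) := by
      exact_mod_cast Nat.le_succ _
    have h3 : (n : ℝ) ≤ M := by
      rw [hM]
      exact_mod_cast (Nat.lt_two_pow_self (n := n)).le
    rw [div_le_iff₀ hε'] at h1
    nlinarith
  clear_value n M ε L
  intro X Y _ _ _ _ _ _ T hsurj hT0 hb x y
  have hA := mid_est ε hε0 hε1 T hsurj hb (x + x) (y + y) (x + y) (by abel) n
  have hB := mid_est ε hε0 hε1 T hsurj hb (x + x) 0 x (by abel) n
  have hC := mid_est ε hε0 hε1 T hsurj hb (y + y) 0 y (by abel) n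
  rw [show x + y - (x + x) = y - x from by abel] at hA
  rw [show x - (x + x) = -x from by abel, norm_neg] at hB
  rw [show y - (y + y) = -y from by abel, norm_neg] at hC
  rw [← hL] at hA hB hC
  set L1 : ℝ := L ^ (2^n) with hL1
  clear_value L1
  have hxy : ‖y - x‖ ≤ ‖x‖ + ‖y‖ := by
    rw [norm_sub_rev]; exact norm_sub_le x y
  have hRA : (1 + ε) * (L1 * ((L1 + 1) * ‖y - x‖)) ≤ 12 * (‖x‖ + ‖y‖) := by
    calc (1 + ε) * (L1 * ((L1 + 1) * ‖y - x‖)) ≤ 2 * (2 * (3 * (‖x‖ + ‖y‖))) := by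
          gcongr <;> linarith [norm_nonneg (y - x)]
      _ = 12 * (‖x‖ + ‖y‖) := by ring
  have hRB : (1 + ε) * (L1 * ((L1 + 1) * ‖x‖)) ≤ 12 * ‖x‖ := by
    calc (1 + ε) * (L1 * ((L1 + 1) * ‖x‖)) ≤ 2 * (2 * (3 * ‖x‖)) := by
          gcongr <;> linarith [norm_nonneg x]
      _ = 12 * ‖x‖ := by ring
  have hRC : (1 + ε) * (L1 * ((L1 + 1) * ‖y‖)) ≤ 12 * ‖y‖ := by
    calc (1 + ε) * (L1 * ((L1 + 1) * ‖y‖)) ≤ 2 * (2 * (3 * ‖y‖)) := by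
          gcongr <;> linarith [norm_nonneg y]
      _ = 12 * ‖y‖ := by ring
  have hbA : (2:ℝ)^n * ‖T (x + y) + T (x + y) - (T (x + x) + T (y + y))‖ ≤ 12 * (‖x‖ + ‖y‖) :=
    le_trans hA hRA
  have hbB : (2:ℝ)^n * ‖T x + T x - (T (x + x) + T 0)‖ ≤ 12 * ‖x‖ := le_trans hB hRB
  have hbC : (2:ℝ)^n * ‖T y + T y - (T (y + y) + T 0)‖ ≤ 12 * ‖y‖ := le_trans hC hRC
  -- combine
  set D : Y := T (x + y) - T x - T y with hD
  clear_value D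
  have hid : (T (x + y) + T (x + y) - (T (x + x) + T (y + y)))
      - (T x + T x - (T (x + x) + T 0)) - (T y + T y - (T (y + y) + T 0)) = D + D := by
    rw [hT0, hD]; abel
  have hDD : ‖D + D‖ = 2 * ‖D‖ := by
    rw [← two_smul ℝ D, norm_smul]; norm_num
  have hsum : 2 * ‖D‖ ≤ ‖T (x + y) + T (x + y) - (T (x + x) + T (y + y))‖
      + ‖T x + T x - (T (x + x) + T 0)‖ + ‖T y + T y - (T (y + y) + T 0)‖ := by
    rw [← hDD, ← hid]
    exact le_trans (norm_sub_le _ _) (add_le_add (norm_sub_le _ _) le_rfl)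
  have h2n : (0:ℝ) < (2:ℝ)^n := by positivity
  have htot : (2:ℝ)^n * (2 * ‖D‖) ≤ 24 * (‖x‖ + ‖y‖) := by
    calc (2:ℝ)^n * (2 * ‖D‖)
        ≤ (2:ℝ)^n * (‖T (x + y) + T (x + y) - (T (x + x) + T (y + y))‖
          + ‖T x + T x - (T (x + x) + T 0)‖ + ‖T y + T y - (T (y + y) + T 0)‖) :=
          mul_le_mul_of_nonneg_left hsum h2n.le
      _ = (2:ℝ)^n * ‖T (x + y) + T (x + y) - (T (x + x) + T (y + y))‖
          + (2:ℝ)^n * ‖T x + T x - (T (x + x) + T 0)‖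
          + (2:ℝ)^n * ‖T y + T y - (T (y + y) + T 0)‖ := by ring
      _ ≤ 12 * (‖x‖ + ‖y‖) + 12 * ‖x‖ + 12 * ‖y‖ := by
          exact add_le_add (add_le_add hbA hbB) hbC
      _ ≤ 24 * (‖x‖ + ‖y‖) := by linarith
  have hnorms : (0:ℝ) ≤ ‖x‖ + ‖y‖ := by positivity
  have hlast : 24 * (‖x‖ + ‖y‖) ≤ 2 * M * (ε' * (‖x‖ + ‖y‖)) := by
    have h12 := mul_le_mul_of_nonneg_right hfin hnorms
    nlinarith [h12]
  have hle : (2:ℝ)^n * (2 * ‖D‖) ≤ 2 * M * (ε' * (‖x‖ + ‖y‖)) := le_trans htot hlast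
  rw [hM] at hle
  have hle2 : (2 * (2:ℝ)^n) * ‖D‖ ≤ (2 * (2:ℝ)^n) * (ε' * (‖x‖ + ‖y‖)) := by linarith [hle]
  exact le_of_mul_le_mul_left hle2 (by positivity)
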